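/- Let w : ZMod k → V (k ≥ 3) be an injective map with w t adjacent to w (t+1) in G for every t (a k-cycle in G), and let π be its net voltage. Let S be the simple graph whose vertex set is {(u, i) ∈ V × Fin n : u lies in the range of w} and in which (u, i) and (v, j) are adjacent if and only if they are adjacent in the permutation derived graph Ĝ and {u, v} = {w t, w (t+1)} for some t (the preimage of the cycle in the derived graph). Then the number of connected components of S equals the number of orbits of the cyclic group generated by π acting on Fin n. -/

import Mathlib

/-- The permutation derived graph of a simple graph `G` under a permutation voltage
assignment `α` (with `α v u = (α u v)⁻¹`). -/
def derivedGraph {V : Type*} {n : ℕ} (G : SimpleGraph V)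
    (α : V → V → Equiv.Perm (Fin n))
    (hα : ∀ u v, α v u = (α u v)⁻¹) : SimpleGraph (V × Fin n) where
  Adj p q := G.Adj p.1 q.1 ∧ q.2 = α p.1 q.1 p.2
  symm := by
    constructor
    rintro ⟨u, i⟩ ⟨v, j⟩ ⟨hadj, hj⟩
    simp only at hadj hj ⊢
    subst hj
    exact ⟨hadj.symm, by simp [hα u v]⟩
  loopless := by
    constructor
    rintro ⟨u, i⟩ ⟨hadj, -⟩
    exact G.irrefl hadj

/-- The net voltage of the closed walk `w 0, w 1, …, w (k-1), w 0` given by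
`w : ZMod k → V`: the product of the edge voltages `α (w t) (w (t+1))` in the order of
traversal. -/
def netVoltage {V : Type*} {n : ℕ} (α : V → V → Equiv.Perm (Fin n))
    {k : ℕ} (w : ZMod k → V) : Equiv.Perm (Fin n) :=
  (((List.range k).map fun t => α (w t) (w (t + 1))).reverse).prod

/-- The preimage in the derived graph of the cycle given by `w : ZMod k → V`: the simple
graph on the vertices of `V × Fin n` lying over the range of `w`, where two vertices are
adjacent iff they are adjacent in the derived graph and the pair of their first coordinates
is `{w t, w (t+1)}` for some `t`. -/
def cyclePreimage {V : Type*} {n k : ℕ} (G : SimpleGraph V)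
    (α : V → V → Equiv.Perm (Fin n)) (hα : ∀ u v, α v u = (α u v)⁻¹)
    (w : ZMod k → V) :
    SimpleGraph {p : V × Fin n // p.1 ∈ Set.range w} where
  Adj s t := (derivedGraph G α hα).Adj s.1 t.1 ∧
    ∃ τ : ZMod k, ({s.1.1, t.1.1} : Set V) = {w τ, w (τ + 1)}
  symm := by
    constructor
    rintro s t ⟨h1, τ, h2⟩
    exact ⟨(derivedGraph G α hα).adj_symm h1, τ, by rw [Set.pair_comm]; exact h2⟩
  loopless := by
    constructor
    rintro s ⟨h1, -⟩
    exact (derivedGraph G α hα).irrefl h1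

section Aux

variable {V : Type*} {n k : ℕ} (G : SimpleGraph V) (α : V → V → Equiv.Perm (Fin n))
  (hα : ∀ u v, α v u = (α u v)⁻¹) (w : ZMod k → V)

/-- partial products of voltages along the cycle -/
noncomputable def partProd (t : ℕ) : Equiv.Perm (Fin n) :=
  (((List.range t).map fun s => α (w s) (w (s + 1))).reverse).prod

theorem partProd_zero : partProd α w 0 = 1 := by simp [partProd]

theorem partProd_succ (t : ℕ) :
    partProd α w (t + 1) = α (w t) (w (t + 1)) * partProd α w t := by
  simp [partProd, List.range_succ]

theorem partProd_k : partProd α w k = netVoltage α w := rfl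

end Aux

/-- Let `w : ZMod k → V` (k ≥ 3) be an injective map with `w t` adjacent to
`w (t+1)` in `G` for all `t` (a k-cycle in G), and let π be its net voltage. Then the
number of connected components of the preimage of the cycle in the permutation derived
graph equals the number of orbits of ⟨π⟩ acting on Fin n. -/
theorem stmt_9 {V : Type*} {n k : ℕ} (hn : 1 ≤ n) (hk : 3 ≤ k)
    (G : SimpleGraph V) (α : V → V → Equiv.Perm (Fin n))
    (hα : ∀ u v, α v u = (α u v)⁻¹)
    (w : ZMod k → V) (hw : Function.Injective w)
    (hadj : ∀ t : ZMod k, G.Adj (w t) (w (t + 1))) :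
    Nat.card (cyclePreimage G α hα w).ConnectedComponent =
      Nat.card (MulAction.orbitRel.Quotient
        (Subgroup.zpowers (netVoltage α w)) (Fin n)) := by
  classical
  haveI : NeZero k := ⟨by omega⟩
  haveI : Fact (1 < k) := ⟨by omega⟩
  set π := netVoltage α w with hπdef
  set S := cyclePreimage G α hα w with hSdef
  set P : ℕ → Equiv.Perm (Fin n) := partProd α w with hPdef
  set sd : Setoid (Fin n) := MulAction.orbitRel (Subgroup.zpowers π) (Fin n) with hsd
  -- basic facts
  have hP0 : P 0 = 1 := partProd_zero α w
  have hPsucc : ∀ t, P (t + 1) = α (w t) (w (t + 1)) * P t := partProd_succ α w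
  have hPk : P k = π := partProd_k α w
  -- the step adjacency
  have hstep : ∀ (t : ℕ) (j : Fin n),
      S.Adj ⟨(w t, j), ⟨t, rfl⟩⟩ ⟨(w (t + 1 : ℕ), α (w t) (w (t + 1)) j), ⟨(t + 1 : ℕ), rfl⟩⟩ := by
    intro t j
    refine ⟨⟨?_, ?_⟩, (t : ZMod k), ?_⟩
    · have := hadj (t : ZMod k)
      simpa [Nat.cast_add, Nat.cast_one] using this
    · simp [Nat.cast_add, Nat.cast_one]
    · simp [Nat.cast_add, Nat.cast_one]
  -- reachability along the cycle
  have hreach : ∀ (t : ℕ) (j : Fin n),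
      S.Reachable ⟨(w (0 : ℕ), j), ⟨(0 : ℕ), rfl⟩⟩ ⟨(w (t : ℕ), P t j), ⟨(t : ℕ), rfl⟩⟩ := by
    intro t
    induction t with
    | zero => intro j; rw [show P 0 j = j by rw [hP0]; rfl]
    | succ t ih =>
        intro j
        refine (ih j).trans ?_
        have h1 : P (t + 1) j = α (w t) (w (t + 1)) (P t j) := by
          rw [hPsucc]; rfl
        rw [show (⟨(w ((t+1 : ℕ)), P (t+1) j), ⟨((t+1:ℕ) : ZMod k), rfl⟩⟩ :
            {p : V × Fin n // p.1 ∈ Set.range w}) =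
            ⟨(w ((t+1 : ℕ)), α (w t) (w (t + 1)) (P t j)), ⟨((t+1:ℕ) : ZMod k), rfl⟩⟩ by
          exact Subtype.ext (by simp [h1])]
        exact (hstep t (P t j)).reachable
  -- the index of a vertex
  have hmem : ∀ v : {p : V × Fin n // p.1 ∈ Set.range w}, ∃ t : ZMod k, w t = v.1.1 :=
    fun v => v.2
  set idx : {p : V × Fin n // p.1 ∈ Set.range w} → ZMod k :=
    fun v => (hmem v).choose with hidxdef
  have hidx : ∀ v, w (idx v) = v.1.1 := fun v => (hmem v).choose_spec
  have hidx_eq : ∀ (t : ZMod k) (i : Fin n) (h), idx (⟨(w t, i), h⟩ :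
      {p : V × Fin n // p.1 ∈ Set.range w}) = t := by
    intro t i h
    apply hw
    exact hidx ⟨(w t, i), h⟩
  -- the map to Fin n
  set φ : {p : V × Fin n // p.1 ∈ Set.range w} → Fin n :=
    fun v => (P (idx v).val)⁻¹ v.1.2 with hφdef
  -- key orbit lemma
  have hkey : ∀ (τ : ZMod k) (i : Fin n),
      Quotient.mk sd ((P (τ + 1).val)⁻¹ (α (w τ) (w (τ + 1)) i)) =
        Quotient.mk sd ((P τ.val)⁻¹ i) := by
    intro τ i
    have hτv : ((τ.val : ℕ) : ZMod k) = τ := ZMod.natCast_zmod_val τ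
    have hβ : α (w τ) (w (τ + 1)) = α (w (τ.val : ℕ)) (w ((τ.val : ℕ) + 1)) := by
      rw [show (((τ.val : ℕ) : ZMod k) + 1 : ZMod k) = τ + 1 by rw [hτv]] <;>
        rw [hτv]
    have hvlt : τ.val < k := ZMod.val_lt τ
    have hval : (τ + 1).val = (τ.val + 1) % k := by
      rw [ZMod.val_add, ZMod.val_one]
    rcases lt_or_eq_of_le (Nat.succ_le_of_lt hvlt) with hlt | heq
    · -- no wraparound
      have h1 : (τ + 1).val = τ.val + 1 := by rw [hval, Nat.mod_eq_of_lt hlt]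
      congr 1
      rw [h1, hPsucc, hβ]
      simp [mul_inv_rev, Equiv.Perm.mul_apply]
    · -- wraparound : τ.val + 1 = k
      have h1 : (τ + 1).val = 0 := by
        rw [hval, show τ.val + 1 = k from heq, Nat.mod_self]
      simp only [h1, hP0, inv_one, Equiv.Perm.one_apply]
      apply Quotient.sound
      refine ⟨⟨π, Subgroup.mem_zpowers π⟩, ?_⟩
      show π • ((P τ.val)⁻¹ i) = _
      have hk2 : k = τ.val + 1 := heq.symm
      have hπeq : π = P (τ.val + 1) := by rw [← hk2, hPk]
      have : π = α (w (τ.val : ℕ)) (w ((τ.val : ℕ) + 1)) * P τ.val := by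
        rw [hπeq, hPsucc]
      rw [this, hβ]
      simp [Equiv.Perm.smul_def, Equiv.Perm.mul_apply]
  -- adjacency respects φ up to orbits
  have hadjF : ∀ a b, S.Adj a b → Quotient.mk sd (φ a) = Quotient.mk sd (φ b) := by
    rintro ⟨⟨u, i⟩, hu⟩ ⟨⟨v, j⟩, hv⟩ ⟨⟨huv, hj⟩, τ, hpair⟩
    simp only at huv hj hpair
    set a : {p : V × Fin n // p.1 ∈ Set.range w} := ⟨(u, i), hu⟩
    set b : {p : V × Fin n // p.1 ∈ Set.range w} := ⟨(v, j), hv⟩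
    have hune : u ≠ v := G.ne_of_adj huv
    have hua : w (idx a) = u := hidx a
    have hvb : w (idx b) = v := hidx b
    rw [← hua, ← hvb] at hpair
    rcases Set.pair_eq_pair_iff.mp hpair with ⟨h1, h2⟩ | ⟨h1, h2⟩
    · -- forward edge
      have hia : idx a = τ := hw h1
      have hib : idx b = τ + 1 := hw h2
      have hval : φ a = (P τ.val)⁻¹ i := by rw [hφdef]; simp only [hia]; rfl
      have hvalb : φ b = (P (τ + 1).val)⁻¹ (α (w τ) (w (τ + 1)) i) := by
        rw [hφdef]; simp only [hib]
        congr 1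
        show j = _; rw [hj, ← h1, ← h2, hua, hvb]
      rw [hval, hvalb, hkey]
    · -- backward edge
      have hia : idx a = τ + 1 := hw h1
      have hib : idx b = τ := hw h2
      have hji : i = α (w τ) (w (τ + 1)) j := by
        have : i = (α u v)⁻¹ j := by rw [hj]; simp
        rw [this, ← hα, ← h1, ← h2, hua, hvb]
      have hval : φ a = (P (τ + 1).val)⁻¹ (α (w τ) (w (τ + 1)) j) := by
        rw [hφdef]; simp only [hia]; rw [← hji]
      have hvalb : φ b = (P τ.val)⁻¹ j := by rw [hφdef]; simp only [hib]; rfl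
      rw [hval, hvalb, hkey]
  -- the map on components
  have hwalkF : ∀ a b, S.Reachable a b → Quotient.mk sd (φ a) = Quotient.mk sd (φ b) := by
    intro a b hab
    obtain ⟨p⟩ := hab
    induction p with
    | nil => rfl
    | cons h _ ih => exact (hadjF _ _ h).trans ih
  set F : S.ConnectedComponent → Quotient sd :=
    Quot.lift (fun v => Quotient.mk sd (φ v)) (fun a b h => hwalkF a b h) with hFdef
  -- reverse map
  have hcomp1 : ∀ j : Fin n,
      S.connectedComponentMk ⟨(w (0 : ℕ), π j), ⟨(0 : ℕ), rfl⟩⟩ =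
        S.connectedComponentMk ⟨(w (0 : ℕ), j), ⟨(0 : ℕ), rfl⟩⟩ := by
    intro j
    have := hreach k j
    have hk0 : ((k : ℕ) : ZMod k) = ((0 : ℕ) : ZMod k) := by
      simp [ZMod.natCast_self]
    rw [show (⟨(w (k : ℕ), P k j), ⟨((k : ℕ) : ZMod k), rfl⟩⟩ :
        {p : V × Fin n // p.1 ∈ Set.range w}) =
        ⟨(w (0 : ℕ), π j), ⟨((0:ℕ) : ZMod k), rfl⟩⟩ by
      refine Subtype.ext ?_
      simp [hk0, hPk]] at this
    exact (SimpleGraph.ConnectedComponent.sound this).symm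
  have hcompZ : ∀ (m : ℤ) (j : Fin n),
      S.connectedComponentMk ⟨(w (0 : ℕ), (π ^ m) j), ⟨(0 : ℕ), rfl⟩⟩ =
        S.connectedComponentMk ⟨(w (0 : ℕ), j), ⟨(0 : ℕ), rfl⟩⟩ := by
    intro m
    induction m using Int.induction_on with
    | zero => intro j; simp
    | succ m ih =>
        intro j
        have h1 : (π ^ ((m : ℤ) + 1)) j = π ((π ^ (m : ℤ)) j) := by
          rw [show ((m : ℤ) + 1) = 1 + m by ring, zpow_add, zpow_one,
            Equiv.Perm.mul_apply]
        rw [show (⟨(w (0 : ℕ), (π ^ ((m : ℤ) + 1)) j), ⟨((0:ℕ) : ZMod k), rfl⟩⟩ :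
            {p : V × Fin n // p.1 ∈ Set.range w}) =
            ⟨(w (0 : ℕ), π ((π ^ (m : ℤ)) j)), ⟨((0:ℕ) : ZMod k), rfl⟩⟩ from
          Subtype.ext (by simp [h1])]
        rw [hcomp1, ih]
    | pred m ih =>
        intro j
        have h1 : (π ^ (-(m : ℤ) - 1)) j = π⁻¹ ((π ^ (-(m : ℤ))) j) := by
          rw [show (-(m : ℤ) - 1) = (-1) + -m by ring, zpow_add, zpow_neg_one,
            Equiv.Perm.mul_apply]
        set x := (π ^ (-(m : ℤ))) j with hx
        have h2 := hcomp1 (π⁻¹ x)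
        rw [show (⟨(w (0:ℕ), π (π⁻¹ x)), ⟨((0:ℕ) : ZMod k), rfl⟩⟩ :
            {p : V × Fin n // p.1 ∈ Set.range w}) =
            ⟨(w (0:ℕ), x), ⟨((0:ℕ) : ZMod k), rfl⟩⟩ from
          Subtype.ext (by simp)] at h2
        rw [show (⟨(w (0 : ℕ), (π ^ (-(m:ℤ) - 1)) j), ⟨((0:ℕ) : ZMod k), rfl⟩⟩ :
            {p : V × Fin n // p.1 ∈ Set.range w}) =
            ⟨(w (0 : ℕ), π⁻¹ x), ⟨((0:ℕ) : ZMod k), rfl⟩⟩ from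
          Subtype.ext (by simp [h1])]
        rw [← h2]
        exact ih j
  have hGresp : ∀ a b : Fin n, sd.r a b →
      S.connectedComponentMk ⟨(w (0 : ℕ), a), ⟨(0 : ℕ), rfl⟩⟩ =
        S.connectedComponentMk ⟨(w (0 : ℕ), b), ⟨(0 : ℕ), rfl⟩⟩ := by
    intro a b hab
    obtain ⟨⟨g, hg⟩, hgb⟩ := hab
    obtain ⟨m, hm⟩ := hg
    have hm' : π ^ m = g := hm
    have ha : a = (π ^ m) b := by rw [hm']; exact hgb.symm
    rw [ha]
    exact hcompZ m b
  set Ginv : Quotient sd → S.ConnectedComponent :=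
    Quotient.lift (fun i : Fin n =>
      S.connectedComponentMk ⟨(w (0 : ℕ), i), ⟨(0 : ℕ), rfl⟩⟩) hGresp with hGdef
  -- the two maps are inverse
  have hleft : ∀ C, Ginv (F C) = C := by
    intro C
    induction C using SimpleGraph.ConnectedComponent.ind with
    | _ v =>
      have htest1 : F (S.connectedComponentMk v) = Quotient.mk sd (φ v) := rfl
      have htest2 : Ginv (Quotient.mk sd (φ v)) =
        S.connectedComponentMk ⟨(w (0 : ℕ), φ v), ⟨(0 : ℕ), rfl⟩⟩ := rfl
      rw [htest1, htest2]
      apply SimpleGraph.ConnectedComponent.sound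
      have := hreach (idx v).val (φ v)
      have hPφ : P (idx v).val (φ v) = v.1.2 := by
        rw [hφdef]; simp
      have hcast : (((idx v).val : ℕ) : ZMod k) = idx v := ZMod.natCast_zmod_val _
      rw [show (⟨(w ((idx v).val : ℕ), P (idx v).val (φ v)),
          ⟨(((idx v).val : ℕ) : ZMod k), rfl⟩⟩ :
          {p : V × Fin n // p.1 ∈ Set.range w}) = v by
        refine Subtype.ext ?_
        refine Prod.ext ?_ ?_
        · show w (((idx v).val : ℕ) : ZMod k) = v.1.1
          rw [hcast]; exact hidx v
        · exact hPφ] at this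
      exact this
  have hright : ∀ q, F (Ginv q) = q := by
    intro q
    induction q using Quotient.ind with
    | _ i =>
      show Quotient.mk sd (φ ⟨(w (0 : ℕ), i), ⟨(0 : ℕ), rfl⟩⟩) = Quotient.mk sd i
      congr 1
      rw [hφdef]
      simp only [hidx_eq]
      have h0 : (idx (⟨(w ((0:ℕ) : ZMod k), i), ⟨(0:ℕ), rfl⟩⟩ : {p : V × Fin n // p.1 ∈ Set.range w})).val = 0 := (congrArg ZMod.val (hidx_eq _ i _)).trans (by simp)
      rw [h0, hP0]
      rfl
  exact Nat.card_congr ⟨F, Ginv, hleft, hright⟩
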